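/- Let k be a field, n ≥ 1 and x ∈ GL_n(k) an invertible matrix lying in the stratum X_m, i.e. the span of {x^j e_1 : j ≥ 0} in k^n has dimension m. Then the k-linear map l_x : k^{n−1} → k[t], l_x(v) = charpoly(u(v)·x) − charpoly(x), has rank m − 1, i.e. its image is an (m−1)-dimensional k-subspace of k[t]. -/

import Mathlib

set_option maxHeartbeats 1000000
set_option synthInstance.maxHeartbeats 400000
open Polynomial Matrix


/-- For `v = (v_1, …, v_{n-1}) ∈ k^{n-1}`, `uPos v` is the `n×n` matrix equal to the
identity except that its first row is `(1, v_1, …, v_{n-1})`; these matrices form the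
unipotent radical `U_Q` of the mirabolic subgroup of `GL_n`. -/
def uPos {k : Type*} [CommRing k] {n : ℕ} (v : Fin (n - 1) → k) :
    Matrix (Fin n) (Fin n) k :=
  Matrix.of fun i j =>
    if i = j then 1
    else if (i : ℕ) = 0 then
      (if h : 1 ≤ (j : ℕ) then v ⟨(j : ℕ) - 1, by have := j.isLt; omega⟩ else 0)
    else 0

section A
variable {k : Type*} [Field k] {N : ℕ} (x : Matrix (Fin (N+1)) (Fin (N+1)) k)

lemma uPos_mul (v : Fin N → k) :
    uPos (n := N+1) v * x =
      x.updateRow 0 (fun j => x 0 j + ∑ i : Fin N, v i * x i.succ j) := by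
  ext r j
  rcases eq_or_ne r 0 with rfl | hr
  · rw [Matrix.mul_apply, Matrix.updateRow_self]
    rw [Fin.sum_univ_succ]
    simp only [uPos, Matrix.of_apply]
    congr 1
    · simp
  · rw [Matrix.mul_apply, Matrix.updateRow_ne hr]
    rw [Finset.sum_eq_single r]
    · simp [uPos]
    · intro s _ hs
      simp only [uPos, Matrix.of_apply]
      rw [if_neg (Ne.symm hs)]
      have : (r : ℕ) ≠ 0 := by
        exact fun h => hr (Fin.ext (by rw [h]; rfl))
      rw [if_neg this, zero_mul]
    · simp

noncomputable def aCol (j : Fin (N+1)) : k[X] := (charmatrix x).adjugate j 0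

noncomputable def qPoly (i : Fin N) : k[X] := ∑ j, C (x i.succ j) * aCol x j

lemma det_updateRow_zero (A : Matrix (Fin (N+1)) (Fin (N+1)) k[X]) (r : Fin (N+1) → k[X]) :
    (A.updateRow 0 r).det = ∑ j, r j * A.adjugate j 0 := by
  have h1 : (A.updateRow 0 r).det = Matrix.cramer Aᵀ r 0 := by
    rw [Matrix.cramer_apply, Matrix.updateCol_transpose, Matrix.det_transpose]
  have h2 : r = ∑ j, r j • (Pi.single j (1 : k[X]) : Fin (N+1) → k[X]) := by
    ext j'
    simp [Pi.single_apply, Finset.sum_ite_eq', eq_comm]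
  rw [h1]
  conv_lhs => rw [h2]
  rw [map_sum (Matrix.cramer Aᵀ) _ Finset.univ, Finset.sum_apply]
  refine Finset.sum_congr rfl fun j _ => ?_
  rw [LinearMap.map_smul, Pi.smul_apply]
  simp [Matrix.adjugate_def, smul_eq_mul]

lemma charpoly_uPos_mul (v : Fin N → k) :
    (uPos (n := N+1) v * x).charpoly = x.charpoly - ∑ i, v i • qPoly x i := by
  have hcm : charmatrix (uPos (n := N+1) v * x)
      = (charmatrix x).updateRow 0
        ((charmatrix x 0) + fun j => -(∑ i, C (v i) * C (x i.succ j))) := by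
    rw [uPos_mul]
    apply Matrix.ext
    intro r j
    rcases eq_or_ne r 0 with rfl | hr
    · simp only [charmatrix_apply, Matrix.updateRow_self, Pi.add_apply]
      rw [map_add, map_sum]
      simp only [_root_.map_mul]
      ring
    · simp only [charmatrix_apply, Matrix.updateRow_ne hr]
  rw [Matrix.charpoly, hcm, Matrix.det_updateRow_add, Matrix.updateRow_eq_self,
    det_updateRow_zero, Matrix.charpoly, sub_eq_add_neg]
  congr 1
  calc ∑ j, (-(∑ i, C (v i) * C (x i.succ j))) * (charmatrix x).adjugate j 0
      = ∑ j, ∑ i, -(C (v i) * (C (x i.succ j) * (charmatrix x).adjugate j 0)) := by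
        refine Finset.sum_congr rfl fun j _ => ?_
        rw [neg_mul, Finset.sum_mul, ← Finset.sum_neg_distrib]
        exact Finset.sum_congr rfl fun i _ => by rw [mul_assoc]
    _ = ∑ i, ∑ j, -(C (v i) * (C (x i.succ j) * (charmatrix x).adjugate j 0)) :=
        Finset.sum_comm
    _ = -∑ i, v i • qPoly x i := by
        rw [← Finset.sum_neg_distrib]
        refine Finset.sum_congr rfl fun i _ => ?_
        rw [qPoly, smul_eq_C_mul, Finset.mul_sum, ← Finset.sum_neg_distrib]
        refine Finset.sum_congr rfl fun j _ => ?_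
        rfl

lemma natDegree_aCol_le (j : Fin (N+1)) : (aCol x j).natDegree ≤ N := by
  rw [aCol, Matrix.adjugate_apply, Matrix.det_apply]
  refine Polynomial.natDegree_sum_le_of_forall_le _ _ fun σ _ => ?_
  set B := (charmatrix x).updateRow 0 (Pi.single j 1) with hB
  have h1 : (Equiv.Perm.sign σ • ∏ i, B (σ i) i).natDegree
      = (∏ i, B (σ i) i).natDegree := by
    rcases Int.units_eq_one_or (Equiv.Perm.sign σ) with h | h <;> simp [h, Units.smul_def]
  rw [h1]
  refine le_trans (Polynomial.natDegree_prod_le _ _) (le_trans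
    (Finset.sum_le_sum (fun i (_ : i ∈ Finset.univ) =>
      (?_ : (B (σ i) i).natDegree ≤ if σ i = 0 then 0 else 1))) ?_)
  · rcases eq_or_ne (σ i) 0 with h | h
    · rw [if_pos h, hB, h, Matrix.updateRow_self]
      rcases eq_or_ne j i with rfl | hji
      · simp
      · simp [Pi.single_apply, Ne.symm hji]
    · rw [if_neg h, hB, Matrix.updateRow_ne h, charmatrix_apply]
      rcases eq_or_ne (σ i) i with hd | hd
      · rw [hd, Matrix.diagonal_apply_eq]
        exact Polynomial.natDegree_X_sub_C_le _
      · rw [Matrix.diagonal_apply_ne _ hd, zero_sub]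
        simp
  · have key : ∀ i : Fin (N+1), (if σ i = 0 then (0:ℕ) else 1) = if i = σ⁻¹ 0 then 0 else 1 := by
      intro i
      congr 1
      simp [eq_comm, Equiv.Perm.eq_inv_iff_eq, eq_iff_iff]
      exact ⟨fun h => by rw [h, Equiv.symm_apply_apply], fun h => by rw [h, Equiv.apply_symm_apply]⟩
    calc ∑ i, (if σ i = 0 then (0:ℕ) else 1)
        = ∑ i : Fin (N+1), (if i = σ⁻¹ 0 then 0 else 1) :=
          Finset.sum_congr rfl fun i _ => key i
      _ ≤ N := by
          rw [← Finset.add_sum_erase _ _ (Finset.mem_univ (σ⁻¹ 0)), if_pos rfl, zero_add,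
            Finset.sum_congr rfl (fun i hi => if_neg (Finset.ne_of_mem_erase hi)),
            Finset.sum_const, smul_eq_mul, mul_one,
            Finset.card_erase_of_mem (Finset.mem_univ _), Finset.card_univ, Fintype.card_fin]
          omega

noncomputable def cvec (d : ℕ) : Fin (N+1) → k := fun j => (aCol x j).coeff d

lemma cvec_zero_of_ge (d : ℕ) (hd : N + 1 ≤ d) : cvec x d = 0 := by
  funext j
  exact Polynomial.coeff_eq_zero_of_natDegree_lt (lt_of_le_of_lt (natDegree_aCol_le x j) hd)

lemma rel_main (i : Fin (N+1)) :
    X * aCol x i = (∑ j, C (x i j) * aCol x j)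
      + (if i = 0 then x.charpoly else 0) := by
  have h := Matrix.mul_adjugate (charmatrix x)
  have h2 := congrArg (fun M => M i 0) h
  simp only [Matrix.mul_apply, Matrix.smul_apply, Matrix.one_apply, smul_eq_mul] at h2
  have h3 : ∀ j, charmatrix x i j * (charmatrix x).adjugate j 0
      = (Matrix.diagonal (fun _ : Fin (N+1) => (X : k[X]))) i j * aCol x j
        - C (x i j) * aCol x j := by
    intro j
    rw [charmatrix_apply, sub_mul]
    rfl
  rw [Finset.sum_congr rfl (fun j _ => h3 j), Finset.sum_sub_distrib] at h2
  have h4 : ∑ j, (Matrix.diagonal (fun _ : Fin (N+1) => (X : k[X]))) i j * aCol x j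
      = X * aCol x i := by
    rw [Finset.sum_eq_single i]
    · rw [Matrix.diagonal_apply_eq]
    · intro j _ hj
      rw [Matrix.diagonal_apply_ne _ (Ne.symm hj), zero_mul]
    · simp
  rw [h4] at h2
  rw [sub_eq_iff_eq_add] at h2
  rw [h2, mul_ite, mul_one, mul_zero, add_comm, Matrix.charpoly]

lemma rel_coeff (d : ℕ) :
    cvec x d = x.mulVec (cvec x (d+1)) + (x.charpoly.coeff (d+1)) •
      (Pi.single 0 1 : Fin (N+1) → k) := by
  funext i
  have h := congrArg (fun p => Polynomial.coeff p (d+1)) (rel_main x i)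
  simp only [Polynomial.coeff_X_mul, Polynomial.coeff_add, Polynomial.finset_sum_coeff,
    Polynomial.coeff_C_mul, apply_ite (fun p => Polynomial.coeff p (d+1)),
    Polynomial.coeff_zero] at h
  simp only [Pi.add_apply, Pi.smul_apply, Matrix.mulVec, dotProduct,
    Pi.single_apply, smul_eq_mul, mul_ite, mul_one, mul_zero]
  exact h

lemma rel_coeff_zero :
    x.mulVec (cvec x 0) + (x.charpoly.coeff 0) • (Pi.single 0 1 : Fin (N+1) → k) = 0 := by
  funext i
  have h := congrArg (fun p => Polynomial.coeff p 0) (rel_main x i)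
  simp only [Polynomial.mul_coeff_zero, Polynomial.coeff_X_zero, zero_mul,
    Polynomial.coeff_add, Polynomial.finset_sum_coeff, Polynomial.coeff_C_mul,
    apply_ite (fun p => Polynomial.coeff p 0), Polynomial.coeff_zero,
    Polynomial.coeff_C_zero] at h
  simp only [Pi.add_apply, Pi.smul_apply, Matrix.mulVec, dotProduct,
    Pi.single_apply, smul_eq_mul, mul_ite, mul_one, mul_zero, Pi.zero_apply]
  exact h.symm

lemma cvec_top : cvec x N = (Pi.single 0 1 : Fin (N+1) → k) := by
  have h := rel_coeff x N
  rw [cvec_zero_of_ge x (N+1) le_rfl, Matrix.mulVec_zero, zero_add] at h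
  have hco : x.charpoly.coeff (N+1) = 1 := by
    have hm := Matrix.charpoly_monic x
    have hd : x.charpoly.natDegree = N + 1 := by
      rw [Matrix.charpoly_natDegree_eq_dim, Fintype.card_fin]
    have h2 := hm.coeff_natDegree
    rw [hd] at h2
    exact h2
  rw [hco, one_smul] at h
  exact h

noncomputable def Ksp : Submodule k (Fin (N+1) → k) :=
  Submodule.span k
    (Set.range fun j : ℕ => (x ^ j).mulVec (Pi.single (0 : Fin (N+1)) (1:k)))

lemma e1_mem_K : (Pi.single (0 : Fin (N+1)) (1:k)) ∈ Ksp x := by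
  refine Submodule.subset_span ⟨0, ?_⟩
  show x ^ 0 *ᵥ _ = _
  rw [pow_zero, Matrix.one_mulVec]

lemma mulVec_mem_K {w : Fin (N+1) → k} (hw : w ∈ Ksp x) : x.mulVec w ∈ Ksp x := by
  induction hw using Submodule.span_induction with
  | mem w hw =>
      obtain ⟨j, rfl⟩ := hw
      refine Submodule.subset_span ⟨j+1, ?_⟩
      rw [Matrix.mulVec_mulVec, ← pow_succ']
  | zero => rw [Matrix.mulVec_zero]; exact Submodule.zero_mem _
  | add a b _ _ ha hb => rw [Matrix.mulVec_add]; exact Submodule.add_mem _ ha hb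
  | smul r a _ ha => rw [Matrix.mulVec_smul]; exact Submodule.smul_mem _ r ha

lemma cvec_mem_K (d : ℕ) : cvec x d ∈ Ksp x := by
  obtain ⟨t, ht⟩ : ∃ t, N + 1 ≤ d + t := ⟨N + 1, le_add_self⟩
  induction t generalizing d with
  | zero => rw [cvec_zero_of_ge x d (by omega)]; exact Submodule.zero_mem _
  | succ t ih =>
      rcases le_or_gt (N+1) d with hd | hd
      · rw [cvec_zero_of_ge x d hd]; exact Submodule.zero_mem _
      · rw [rel_coeff x d]
        exact Submodule.add_mem _ (mulVec_mem_K x (ih (d+1) (by omega)))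
          (Submodule.smul_mem _ _ (e1_mem_K x))

lemma mulVec_cvec_mem_W (d : ℕ) :
    x.mulVec (cvec x d) ∈ Submodule.span k (Set.range (cvec x)) := by
  cases d with
  | zero =>
      have h := rel_coeff_zero x
      have h2 : x.mulVec (cvec x 0) = (-(x.charpoly.coeff 0)) • cvec x N := by
        rw [cvec_top, neg_smul, eq_neg_iff_add_eq_zero]
        exact h
      rw [h2]
      exact Submodule.smul_mem _ _ (Submodule.subset_span ⟨N, rfl⟩)
  | succ d =>
      have h := rel_coeff x d
      have h2 : x.mulVec (cvec x (d+1))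
          = cvec x d - (x.charpoly.coeff (d+1)) • cvec x N := by
        rw [cvec_top, eq_sub_iff_add_eq, ← h]
      rw [h2]
      exact Submodule.sub_mem _ (Submodule.subset_span ⟨d, rfl⟩)
        (Submodule.smul_mem _ _ (Submodule.subset_span ⟨N, rfl⟩))

lemma W_eq_K : Submodule.span k (Set.range (cvec x)) = Ksp x := by
  apply le_antisymm
  · rw [Submodule.span_le]
    rintro _ ⟨d, rfl⟩
    exact cvec_mem_K x d
  · rw [Ksp, Submodule.span_le]
    rintro _ ⟨j, rfl⟩
    induction j with
    | zero =>
        show x ^ 0 *ᵥ _ ∈ _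
        rw [pow_zero, Matrix.one_mulVec]
        rw [← cvec_top x]
        exact Submodule.subset_span ⟨N, rfl⟩
    | succ j ih =>
        show x ^ (j+1) *ᵥ _ ∈ _
        rw [pow_succ', ← Matrix.mulVec_mulVec]
        have hW : ∀ w ∈ Submodule.span k (Set.range (cvec x)),
            x.mulVec w ∈ Submodule.span k (Set.range (cvec x)) := by
          intro w hw
          induction hw using Submodule.span_induction with
          | mem w hw => obtain ⟨d, rfl⟩ := hw; exact mulVec_cvec_mem_W x d
          | zero => rw [Matrix.mulVec_zero]; exact Submodule.zero_mem _
          | add a b _ _ ha hb => rw [Matrix.mulVec_add]; exact Submodule.add_mem _ ha hb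
          | smul r a _ ha => rw [Matrix.mulVec_smul]; exact Submodule.smul_mem _ r ha
        exact hW _ ih

lemma map_K (hx : IsUnit x) :
    Submodule.map x.mulVecLin (Ksp x) = Ksp x := by
  have hle : Submodule.map x.mulVecLin (Ksp x) ≤ Ksp x := by
    rw [Submodule.map_le_iff_le_comap]
    intro w hw
    exact mulVec_mem_K x hw
  have hinj : Function.Injective x.mulVecLin := by
    rw [Matrix.coe_mulVecLin]
    exact Matrix.mulVec_injective_iff_isUnit.mpr hx
  refine Submodule.eq_of_le_of_finrank_le hle ?_
  exact le_of_eq (Submodule.equivMapOfInjective _ hinj _).finrank_eq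

lemma span_bvec (hx : IsUnit x) :
    Submodule.span k (Set.range fun d : ℕ => x.mulVec (cvec x d)) = Ksp x := by
  have h : (fun d : ℕ => x.mulVec (cvec x d)) = x.mulVecLin ∘ cvec x := rfl
  rw [h, Set.range_comp, ← Submodule.map_span, W_eq_K, map_K x hx]

lemma ker_pi : LinearMap.ker (LinearMap.funLeft k k (Fin.succ : Fin N → Fin (N+1)))
    = Submodule.span k {(Pi.single (0 : Fin (N+1)) (1:k) : Fin (N+1) → k)} := by
  apply le_antisymm
  · intro w hw
    rw [LinearMap.mem_ker] at hw
    have hw' : ∀ i : Fin N, w i.succ = 0 := fun i => congrFun hw i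
    have : w = w 0 • (Pi.single (0 : Fin (N+1)) (1:k) : Fin (N+1) → k) := by
      funext j
      induction j using Fin.cases with
      | zero => simp
      | succ i => simp [hw' i, Pi.single_apply, (Fin.succ_ne_zero i)]
    rw [this]
    exact Submodule.smul_mem _ _ (Submodule.mem_span_singleton_self _)
  · rw [Submodule.span_le, Set.singleton_subset_iff]
    rw [SetLike.mem_coe, LinearMap.mem_ker]
    funext i
    simp [LinearMap.funLeft, Pi.single_apply, (Fin.succ_ne_zero i).symm]

lemma finrank_map_pi (hx : IsUnit x) :
    Module.finrank k (Submodule.map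
        (LinearMap.funLeft k k (Fin.succ : Fin N → Fin (N+1))) (Ksp x))
      = Module.finrank k (Ksp x) - 1 := by
  set π := LinearMap.funLeft k k (Fin.succ : Fin N → Fin (N+1))
  set f := π.comp (Ksp x).subtype with hf
  have hrank := LinearMap.finrank_range_add_finrank_ker f
  have hrange : LinearMap.range f = Submodule.map π (Ksp x) := by
    rw [hf, LinearMap.range_comp, Submodule.range_subtype]
  have hker : LinearMap.ker f
      = Submodule.comap (Ksp x).subtype
          (Submodule.span k {(Pi.single (0 : Fin (N+1)) (1:k) : Fin (N+1) → k)}) := by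
    rw [hf, LinearMap.ker_comp, ker_pi]
  have hle : Submodule.span k {(Pi.single (0 : Fin (N+1)) (1:k) : Fin (N+1) → k)} ≤ Ksp x := by
    rw [Submodule.span_le, Set.singleton_subset_iff]
    exact e1_mem_K x
  have hone : Module.finrank k (LinearMap.ker f) = 1 := by
    rw [hker, (Submodule.comapSubtypeEquivOfLe hle).finrank_eq]
    apply finrank_span_singleton
    intro h0
    have := congrFun h0 (0 : Fin (N+1))
    simp at this
  rw [hrange, hone] at hrank
  omega

noncomputable def Tmap : (Fin (N+1) → k) →ₗ[k] Polynomial k :=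
  ∑ d : Fin (N+1), (Polynomial.monomial (d : ℕ)).comp (LinearMap.proj d)

lemma Tmap_apply (w : Fin (N+1) → k) :
    Tmap (N := N) (k := k) w = ∑ d : Fin (N+1), Polynomial.monomial (d : ℕ) (w d) := by
  rw [Tmap, LinearMap.sum_apply]
  rfl

lemma Tmap_coeff (w : Fin (N+1) → k) (d : Fin (N+1)) :
    (Tmap (N := N) (k := k) w).coeff (d : ℕ) = w d := by
  rw [Tmap_apply, Polynomial.finset_sum_coeff]
  rw [Finset.sum_eq_single d]
  · rw [Polynomial.coeff_monomial, if_pos rfl]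
  · intro e _ he
    rw [Polynomial.coeff_monomial, if_neg (fun h => he (Fin.val_injective h))]
  · simp

lemma Tmap_injective : Function.Injective (Tmap (N := N) (k := k)) := by
  rw [injective_iff_map_eq_zero]
  intro w hw
  funext d
  have := Tmap_coeff (N := N) w d
  rw [hw] at this
  simpa using this.symm

lemma natDegree_qPoly_le (i : Fin N) : (qPoly x i).natDegree ≤ N := by
  refine Polynomial.natDegree_sum_le_of_forall_le _ _ fun j _ => ?_
  exact le_trans (Polynomial.natDegree_C_mul_le _ _) (natDegree_aCol_le x j)

lemma qPoly_eq_Tmap (i : Fin N) :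
    qPoly x i = Tmap (fun d : Fin (N+1) => (qPoly x i).coeff (d : ℕ)) := by
  rw [Tmap_apply]
  conv_lhs => rw [(qPoly x i).as_sum_range' (N+1) (lt_of_le_of_lt (natDegree_qPoly_le x i) (Nat.lt_succ_self N))]
  rw [Fin.sum_univ_eq_sum_range (fun d => Polynomial.monomial d ((qPoly x i).coeff d))]

lemma coeff_qPoly (i : Fin N) (d : ℕ) :
    (qPoly x i).coeff d = x.mulVec (cvec x d) i.succ := by
  rw [qPoly, Polynomial.finset_sum_coeff]
  simp only [Polynomial.coeff_C_mul]
  rfl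

lemma finrank_span_q (hx : IsUnit x) :
    Module.finrank k (Submodule.span k (Set.range fun i : Fin N => qPoly x i))
      = Module.finrank k (Ksp x) - 1 := by
  classical
  set π := LinearMap.funLeft k k (Fin.succ : Fin N → Fin (N+1)) with hπ
  set M : Matrix (Fin N) (Fin (N+1)) k :=
    Matrix.of (fun i d => (qPoly x i).coeff (d : ℕ)) with hM
  have hrows : (fun i : Fin N => qPoly x i) = Tmap ∘ (fun i : Fin N => M i) := by
    funext i
    exact qPoly_eq_Tmap x i
  have h1 : Submodule.span k (Set.range fun i : Fin N => qPoly x i)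
      = Submodule.map Tmap (Submodule.span k (Set.range fun i : Fin N => M i)) := by
    rw [Submodule.map_span, ← Set.range_comp, ← hrows]
  have h2 : Module.finrank k (Submodule.span k (Set.range fun i : Fin N => qPoly x i))
      = Module.finrank k (Submodule.span k (Set.range fun i : Fin N => M i)) := by
    rw [h1]
    exact (Submodule.equivMapOfInjective Tmap Tmap_injective _).finrank_eq.symm
  have h3 : Module.finrank k (Submodule.span k (Set.range fun i : Fin N => M i)) = M.rank := by
    have := M.rank_eq_finrank_span_row
    rw [this]
    rfl
  have h4 : M.rank = Mᵀ.rank := (Matrix.rank_transpose M).symm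
  have h5 : Mᵀ.rank = Module.finrank k (Submodule.span k (Set.range fun d : Fin (N+1) => Mᵀ d)) :=
    Mᵀ.rank_eq_finrank_span_row
  have hcol : (fun d : Fin (N+1) => Mᵀ d)
      = fun d : Fin (N+1) => π (x.mulVec (cvec x (d : ℕ))) := by
    funext d i
    rw [hπ]
    show M i d = x.mulVec (cvec x (d : ℕ)) i.succ
    exact coeff_qPoly x i d
  have h6 : Submodule.span k (Set.range fun d : Fin (N+1) => Mᵀ d)
      = Submodule.map π (Ksp x) := by
    rw [hcol, ← span_bvec x hx]
    have hcomp : (fun d : ℕ => π (x.mulVec (cvec x d)))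
        = π ∘ (fun d : ℕ => x.mulVec (cvec x d)) := rfl
    apply le_antisymm
    · rw [Submodule.span_le]
      rintro _ ⟨d, rfl⟩
      exact Submodule.mem_map_of_mem (Submodule.subset_span ⟨(d : ℕ), rfl⟩)
    · rw [Submodule.map_span, ← Set.range_comp, ← hcomp, Submodule.span_le]
      rintro _ ⟨d, rfl⟩
      show π (x.mulVec (cvec x d)) ∈ _
      rcases le_or_gt d N with hd | hd
      · exact Submodule.subset_span ⟨⟨d, by omega⟩, rfl⟩
      · have h0 : cvec x d = 0 := cvec_zero_of_ge x d (by omega)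
        rw [h0, Matrix.mulVec_zero, map_zero]
        exact Submodule.zero_mem _
  rw [h2, h3, h4, h5, h6]
  exact finrank_map_pi x hx

end A

/-- Let `k` be a field, `n ≥ 1` and `x ∈ GL_n(k)` lying in the stratum
`X_m`, i.e. the span of `{x^j e₁ : j ≥ 0}` has dimension `m`.  Then the linear map
`l_x : k^{n-1} → k[t]`, `l_x(v) = charpoly(u(v)·x) − charpoly(x)`, has rank `m - 1`:
its image spans an `(m-1)`-dimensional subspace of `k[t]`. -/
theorem stmt10 {k : Type*} [Field k] {n m : ℕ} (hn : 1 ≤ n)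
    (x : Matrix (Fin n) (Fin n) k) (hx : IsUnit x)
    (hstr : Module.finrank k (Submodule.span k
      (Set.range fun j : ℕ => (x ^ j).mulVec (Pi.single (⟨0, hn⟩ : Fin n) (1 : k)))) = m) :
    Module.finrank k (Submodule.span k
      (Set.range fun v : Fin (n - 1) → k =>
        (uPos v * x).charpoly - x.charpoly)) = m - 1 := by
  rcases n with _ | N
  · omega
  have h0 : (⟨0, hn⟩ : Fin (N+1)) = 0 := by
    apply Fin.ext
    simp
  rw [h0] at hstr
  have hK : Module.finrank k (Ksp x) = m := hstr
  have hspan : Submodule.span k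
      (Set.range fun v : Fin (N + 1 - 1) → k => (uPos v * x).charpoly - x.charpoly)
      = Submodule.span k (Set.range fun i : Fin N => qPoly x i) := by
    apply le_antisymm
    · rw [Submodule.span_le]
      rintro _ ⟨v, rfl⟩
      show (uPos v * x).charpoly - x.charpoly ∈ _
      have : (uPos (n := N+1) v * x).charpoly - x.charpoly = -∑ i, v i • qPoly x i := by
        rw [charpoly_uPos_mul, sub_sub_cancel_left]
      rw [SetLike.mem_coe, this]
      exact Submodule.neg_mem _ (Submodule.sum_mem _ fun i _ =>
        Submodule.smul_mem _ _ (Submodule.subset_span ⟨i, rfl⟩))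
    · rw [Submodule.span_le]
      rintro _ ⟨i, rfl⟩
      show qPoly x i ∈ _
      have hsum : ∑ j, (Pi.single i (1:k) : Fin N → k) j • qPoly x j = qPoly x i := by
        rw [Finset.sum_eq_single i]
        · rw [Pi.single_eq_same, one_smul]
        · intro j _ hj
          rw [Pi.single_eq_of_ne hj, zero_smul]
        · simp
      have : qPoly x i
          = -((uPos (n := N+1) (Pi.single i 1) * x).charpoly - x.charpoly) := by
        rw [charpoly_uPos_mul, sub_sub_cancel_left, neg_neg]
        exact hsum.symm
      rw [SetLike.mem_coe, this]
      exact Submodule.neg_mem _ (Submodule.subset_span ⟨Pi.single i 1, rfl⟩)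
  rw [hspan, finrank_span_q x hx, hK]
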